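/- Let (G,γ) be a Z/3Z-colored graph and let G̃ be its development. If G̃ is not Laman-sparse (i.e., not (2,3)-sparse), then (G,γ) is not cone-Laman-sparse. Equivalently, if (G,γ) is cone-Laman-sparse then G̃ is Laman-sparse. -/

import Mathlib

/-- A finite directed multigraph: each edge has a tail and a head vertex. -/
structure Multigraph (V : Type) (E : Type) where
  tail : E → V
  head : E → V

namespace Multigraph

variable {V E Γ : Type}

/-- The starting vertex of a step `(e, b)`: the edge `e` traversed forwards if `b = true`,
backwards otherwise. -/
def stepSrc (G : Multigraph V E) (s : E × Bool) : V :=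
  if s.2 then G.tail s.1 else G.head s.1

/-- The ending vertex of a step `(e, b)`. -/
def stepDst (G : Multigraph V E) (s : E × Bool) : V :=
  if s.2 then G.head s.1 else G.tail s.1

/-- `G.WalkFrom u v w`: the list of steps `w` is a walk from `u` to `v`
(edge orientations ignored: each step records an edge and a traversal direction). -/
inductive WalkFrom (G : Multigraph V E) : V → V → List (E × Bool) → Prop
  | nil (v : V) : WalkFrom G v v []
  | cons {v : V} (s : E × Bool) {rest : List (E × Bool)} :
      WalkFrom G (G.stepDst s) v rest → WalkFrom G (G.stepSrc s) v (s :: rest)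

/-- `ρ` of a walk: the sum of the colors of forward-traversed edges minus
the sum of the colors of backward-traversed edges. -/
def rho [AddCommGroup Γ] (γ : E → Γ) (w : List (E × Bool)) : Γ :=
  (w.map fun s => if s.2 then γ s.1 else -γ s.1).sum

/-- A cycle contained in the subgraph with edge set `S`: a nonempty closed walk,
with no repeated edges and no repeated vertices. -/
def IsCycleIn (G : Multigraph V E) (S : Finset E) (w : List (E × Bool)) : Prop :=
  (∃ v, G.WalkFrom v v w) ∧ w ≠ [] ∧ (∀ s ∈ w, s.1 ∈ S) ∧
    (w.map Prod.fst).Nodup ∧ (w.map G.stepSrc).Nodup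

/-- The subgraph with edge set `S` has trivial `Γ`-image: `ρ(C) = 0` for every
cycle `C` contained in it. -/
def TrivialImage [AddCommGroup Γ] (G : Multigraph V E) (γ : E → Γ) (S : Finset E) : Prop :=
  ∀ w, G.IsCycleIn S w → rho γ w = 0

/-- The vertices spanned by an edge set. -/
def verts [DecidableEq V] (G : Multigraph V E) (S : Finset E) : Finset V :=
  S.image G.tail ∪ S.image G.head

/-- The edge set `S` is `(k, ℓ)`-sparse: every nonempty subgraph with `n'` vertices and
`m'` edges satisfies `m' ≤ k n' - ℓ`. -/
def Sparse [DecidableEq V] (G : Multigraph V E) (k ℓ : ℤ) (S : Finset E) : Prop :=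
  ∀ S' ⊆ S, S'.Nonempty → (S'.card : ℤ) ≤ k * ((G.verts S').card : ℤ) - ℓ

/-- The edge set `S` is a `(k, ℓ)`-graph (as a subgraph on its spanned vertices):
it is `(k, ℓ)`-sparse and has exactly `k n - ℓ` edges. -/
def Tight [DecidableEq V] (G : Multigraph V E) (k ℓ : ℤ) (S : Finset E) : Prop :=
  G.Sparse k ℓ S ∧ (S.card : ℤ) = k * ((G.verts S).card : ℤ) - ℓ

/-- The edge set `S` is a `(k, ℓ)`-circuit: edge-minimal not `(k, ℓ)`-sparse. -/
def Circuit [DecidableEq V] [DecidableEq E] (G : Multigraph V E) (k ℓ : ℤ) (S : Finset E) :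
    Prop :=
  ¬ G.Sparse k ℓ S ∧ ∀ e ∈ S, G.Sparse k ℓ (S.erase e)

/-- A `(k, ℓ)`-basis of `G`: a maximal `(k, ℓ)`-sparse edge set. -/
def Basis [DecidableEq V] (G : Multigraph V E) (k ℓ : ℤ) (L : Finset E) : Prop :=
  G.Sparse k ℓ L ∧ ∀ L', L ⊆ L' → G.Sparse k ℓ L' → L' = L

/-- `C` is the fundamental `(k, ℓ)`-circuit of some edge `e ∉ L` with respect to the
`(k, ℓ)`-basis `L`: a `(k, ℓ)`-circuit contained in `L + e`. -/
def FundCircuit [DecidableEq V] [DecidableEq E] (G : Multigraph V E) (k ℓ : ℤ)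
    (L C : Finset E) : Prop :=
  G.Circuit k ℓ C ∧ ∃ e, e ∉ L ∧ C ⊆ insert e L

/-- The whole graph `G` is a `(k, ℓ)`-graph: `(k, ℓ)`-sparse, with exactly
`k n - ℓ` edges where `n` is the number of vertices of `G`. -/
def IsKLGraph [DecidableEq V] [Fintype V] [Fintype E] (G : Multigraph V E) (k ℓ : ℤ) : Prop :=
  G.Sparse k ℓ Finset.univ ∧ (Fintype.card E : ℤ) = k * (Fintype.card V : ℤ) - ℓ

/-- The colored subgraph with edge set `S` is Ross-sparse: nonempty subgraphs with trivial
`Γ`-image satisfy `m' ≤ 2n' - 3`, and those with non-trivial image satisfy `m' ≤ 2n' - 2`. -/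
def RossSparseOn [DecidableEq V] [AddCommGroup Γ] (G : Multigraph V E) (γ : E → Γ)
    (S : Finset E) : Prop :=
  ∀ S' ⊆ S, S'.Nonempty →
    (G.TrivialImage γ S' → (S'.card : ℤ) ≤ 2 * ((G.verts S').card : ℤ) - 3) ∧
    (¬ G.TrivialImage γ S' → (S'.card : ℤ) ≤ 2 * ((G.verts S').card : ℤ) - 2)

/-- The colored subgraph with edge set `S` is a Ross graph (on its spanned vertices):
Ross-sparse with exactly `2n - 2` edges. -/
def RossGraphOn [DecidableEq V] [AddCommGroup Γ] (G : Multigraph V E) (γ : E → Γ)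
    (S : Finset E) : Prop :=
  G.RossSparseOn γ S ∧ (S.card : ℤ) = 2 * ((G.verts S).card : ℤ) - 2

/-- The whole colored graph `(G, γ)` is a Ross graph: Ross-sparse with exactly `2n - 2`
edges, `n` being the number of vertices of `G`. -/
def RossGraph [DecidableEq V] [Fintype V] [Fintype E] [AddCommGroup Γ] (G : Multigraph V E)
    (γ : E → Γ) : Prop :=
  G.RossSparseOn γ Finset.univ ∧ (Fintype.card E : ℤ) = 2 * (Fintype.card V : ℤ) - 2

/-- The colored graph `(G, γ)` is cone-Laman-sparse: nonempty subgraphs with trivial image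
satisfy `m' ≤ 2n' - 3`, those with non-trivial image satisfy `m' ≤ 2n' - 1`. -/
def ConeLamanSparse [DecidableEq V] [AddCommGroup Γ] (G : Multigraph V E) (γ : E → Γ) : Prop :=
  ∀ S' : Finset E, S'.Nonempty →
    (G.TrivialImage γ S' → (S'.card : ℤ) ≤ 2 * ((G.verts S').card : ℤ) - 3) ∧
    (¬ G.TrivialImage γ S' → (S'.card : ℤ) ≤ 2 * ((G.verts S').card : ℤ) - 1)

/-- The whole colored graph `(G, γ)` is a cone-Laman graph: cone-Laman-sparse with exactly
`2n - 1` edges, `n` being the number of vertices of `G`. -/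
def ConeLamanGraph [DecidableEq V] [Fintype V] [Fintype E] [AddCommGroup Γ]
    (G : Multigraph V E) (γ : E → Γ) : Prop :=
  G.ConeLamanSparse γ ∧ (Fintype.card E : ℤ) = 2 * (Fintype.card V : ℤ) - 1

/-- A (simple) path from `u` to `v` using only edges in `S`: a walk visiting no vertex
twice. -/
def IsPathIn (G : Multigraph V E) (S : Finset E) (u v : V) (w : List (E × Bool)) : Prop :=
  G.WalkFrom u v w ∧ (∀ s ∈ w, s.1 ∈ S) ∧ (u :: w.map G.stepDst).Nodup

/-- `G` is connected. -/
def Connected (G : Multigraph V E) : Prop :=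
  ∀ u v : V, ∃ w : List (E × Bool), G.WalkFrom u v w

/-- `T` is a spanning tree of `G`: every pair of vertices is joined by a path in `T`,
and `T` contains no cycle. -/
def IsSpanningTree (G : Multigraph V E) (T : Finset E) : Prop :=
  (∀ u v : V, ∃ w, G.IsPathIn T u v w) ∧ ∀ w, ¬ G.IsCycleIn T w

/-- `T` is a spanning forest of `G`: a maximal acyclic edge set. -/
def IsSpanningForest (G : Multigraph V E) (T : Finset E) : Prop :=
  (∀ w, ¬ G.IsCycleIn T w) ∧
    ∀ T', T ⊆ T' → (∀ w, ¬ G.IsCycleIn T' w) → T' = T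

/-- In the tree `T` rooted at `r`, vertex `x` lies on the (unique) path from the root `r`
to `y`; i.e. `x` is an ancestor of `y`. -/
def Anc (G : Multigraph V E) (T : Finset E) (r x y : V) : Prop :=
  ∀ w, G.IsPathIn T r y w → x ∈ (r :: w.map G.stepDst)

/-- `a` is the least common ancestor of `i` and `j` in the tree `T` rooted at `r`:
the vertex where the paths from `i` to `r` and from `j` to `r` first converge. -/
def IsLCA (G : Multigraph V E) (T : Finset E) (r a i j : V) : Prop :=
  G.Anc T r a i ∧ G.Anc T r a j ∧ ∀ x, G.Anc T r x i → G.Anc T r x j → G.Anc T r x a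

/-- The development of a `ℤ/3ℤ`-colored graph: vertices `i_z`, and for each edge `ij`
with color `γ_ij` the three edges `i_z j_{z + γ_ij}`. -/
def Development (G : Multigraph V E) (γ : E → ZMod 3) :
    Multigraph (V × ZMod 3) (E × ZMod 3) where
  tail s := (G.tail s.1, s.2)
  head s := (G.head s.1, s.2 + γ s.1)

/-- The lift `π⁻¹(S)` in the development of the subgraph with edge set `S`. -/
def lift [DecidableEq E] (S : Finset E) : Finset (E × ZMod 3) :=
  S ×ˢ (Finset.univ : Finset (ZMod 3))

/-- The map `α_z : i_w ↦ i_{w+z}` on the vertices of the development. -/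
def devShift (z : ZMod 3) : V × ZMod 3 → V × ZMod 3 :=
  fun p => (p.1, p.2 + z)

/-- The map `α_z` on the edges of the development. -/
def devShiftE (z : ZMod 3) : E × ZMod 3 → E × ZMod 3 :=
  fun s => (s.1, s.2 + z)

/-- Two vertices of a multigraph are adjacent if some edge joins them (in either
direction). -/
def Adj (G : Multigraph V E) (u v : V) : Prop :=
  ∃ e, (G.tail e = u ∧ G.head e = v) ∨ (G.tail e = v ∧ G.head e = u)

end Multigraph

section Aux

variable {V E : Type} [DecidableEq V] [DecidableEq E]

lemma aux_verts_union (H : Multigraph V E) (X Y : Finset E) :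
    H.verts (X ∪ Y) = H.verts X ∪ H.verts Y := by
  ext a
  simp only [Multigraph.verts, Finset.mem_union, Finset.mem_image]
  aesop

lemma aux_verts_mono (H : Multigraph V E) {X Y : Finset E} (h : X ⊆ Y) :
    H.verts X ⊆ H.verts Y := by
  intro a ha
  simp only [Multigraph.verts, Finset.mem_union, Finset.mem_image] at *
  obtain h1 | h1 := ha
  · exact Or.inl (by obtain ⟨e, he, rfl⟩ := h1; exact ⟨e, h he, rfl⟩)
  · exact Or.inr (by obtain ⟨e, he, rfl⟩ := h1; exact ⟨e, h he, rfl⟩)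

lemma aux_verts_card_submod (H : Multigraph V E) (X Y : Finset E) :
    (H.verts (X ∪ Y)).card + (H.verts (X ∩ Y)).card
      ≤ (H.verts X).card + (H.verts Y).card := by
  have h1 : H.verts (X ∩ Y) ⊆ H.verts X ∩ H.verts Y := by
    intro a ha
    simp only [Finset.mem_inter]
    exact ⟨aux_verts_mono H Finset.inter_subset_left ha,
      aux_verts_mono H Finset.inter_subset_right ha⟩
  have h2 := Finset.card_union_add_card_inter (H.verts X) (H.verts Y)
  have h3 : (H.verts (X ∩ Y)).card ≤ (H.verts X ∩ H.verts Y).card := Finset.card_le_card h1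
  rw [aux_verts_union]
  omega

lemma aux_rho_walk {Γ : Type} [AddCommGroup Γ] (H : Multigraph V E) (γ : E → Γ)
    (S : Finset E) (ψ : V → Γ)
    (hψ : ∀ e ∈ S, ψ (H.head e) = ψ (H.tail e) + γ e) :
    ∀ {u v : V} {w : List (E × Bool)}, H.WalkFrom u v w → (∀ s ∈ w, s.1 ∈ S) →
      Multigraph.rho γ w = ψ v - ψ u := by
  intro u v w hw
  induction hw with
  | nil v => intro _; simp [Multigraph.rho]
  | @cons v s rest hrest ih =>
    intro hmem
    have hs : s.1 ∈ S := hmem s List.mem_cons_self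
    have ih' := ih (fun t ht => hmem t (List.mem_cons_of_mem _ ht))
    have hkey := hψ s.1 hs
    simp only [Multigraph.rho, List.map_cons, List.sum_cons] at ih' ⊢
    rcases Bool.eq_false_or_eq_true s.2 with hb | hb <;>
      simp only [Multigraph.stepSrc, Multigraph.stepDst, hb, if_true, Bool.false_eq_true,
        if_false] at ih' ⊢ <;>
      rw [ih', hkey] <;> abel

lemma aux_trivialImage_of_coboundary {Γ : Type} [AddCommGroup Γ] (H : Multigraph V E)
    (γ : E → Γ) (S : Finset E) (ψ : V → Γ)
    (hψ : ∀ e ∈ S, ψ (H.head e) = ψ (H.tail e) + γ e) :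
    H.TrivialImage γ S := by
  intro w hw
  obtain ⟨⟨v, hv⟩, -, hmem, -, -⟩ := hw
  rw [aux_rho_walk H γ S ψ hψ hv hmem]
  simp

/-- shift of an edge set of the development by `+1`. -/
def shiftE {E : Type} [DecidableEq E] (X : Finset (E × ZMod 3)) : Finset (E × ZMod 3) :=
  X.image (fun s => (s.1, s.2 + 1))

lemma aux_shiftE_inj {E : Type} :
    Function.Injective (fun s : E × ZMod 3 => (s.1, s.2 + 1)) := by
  intro a b h
  simp only [Prod.mk.injEq] at h
  exact Prod.ext h.1 (add_right_cancel h.2)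

lemma aux_mem_shiftE {E : Type} [DecidableEq E] (X : Finset (E × ZMod 3)) (e : E)
    (z : ZMod 3) : (e, z) ∈ shiftE X ↔ (e, z - 1) ∈ X := by
  simp only [shiftE, Finset.mem_image, Prod.mk.injEq]
  constructor
  · rintro ⟨⟨e', z'⟩, h, rfl, rfl⟩
    simpa using h
  · intro h
    exact ⟨(e, z - 1), h, rfl, by ring⟩

lemma aux_card_shiftE {E : Type} [DecidableEq E] (X : Finset (E × ZMod 3)) :
    (shiftE X).card = X.card :=
  Finset.card_image_of_injective X aux_shiftE_inj

lemma aux_verts_shiftE (G : Multigraph V E) (γ : E → ZMod 3) (X : Finset (E × ZMod 3)) :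
    (G.Development γ).verts (shiftE X)
      = ((G.Development γ).verts X).image (fun p => (p.1, p.2 + 1)) := by
  simp only [Multigraph.verts, shiftE, Finset.image_union, Finset.image_image]
  congr 1 <;> apply Finset.image_congr <;> intro s _ <;>
    simp [Multigraph.Development, Function.comp] <;> ring

lemma aux_card_verts_shiftE (G : Multigraph V E) (γ : E → ZMod 3)
    (X : Finset (E × ZMod 3)) :
    ((G.Development γ).verts (shiftE X)).card = ((G.Development γ).verts X).card := by
  rw [aux_verts_shiftE]
  exact Finset.card_image_of_injective _ (by
    intro a b h
    simp only [Prod.mk.injEq] at h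
    exact Prod.ext h.1 (add_right_cancel h.2))

end Aux

/-- if the development is not Laman-sparse, then `(G, γ)` is not
cone-Laman-sparse. -/
theorem development_not_sparse_implies_not_cone_laman_sparse
    {V E : Type} [Fintype V] [Fintype E] [DecidableEq V] [DecidableEq E]
    (G : Multigraph V E) (γ : E → ZMod 3)
    (hdev : ¬ (G.Development γ).Sparse 2 3 Finset.univ) :
    ¬ G.ConeLamanSparse γ := by
  classical
  intro hCL
  -- extract a minimal violating edge set D of the development
  rw [Multigraph.Sparse] at hdev
  push_neg at hdev
  obtain ⟨D0, -, hD0ne, hD0⟩ := hdev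
  let T : Finset (Finset (E × ZMod 3)) :=
    Finset.univ.filter (fun X => X.Nonempty ∧
      2 * (((G.Development γ).verts X).card : ℤ) - 3 < (X.card : ℤ))
  have hTne : T.Nonempty := ⟨D0, by
    simp only [T, Finset.mem_filter, Finset.mem_univ, true_and]
    exact ⟨hD0ne, by omega⟩⟩
  obtain ⟨D, hDT, hDmin⟩ := T.exists_min_image Finset.card hTne
  simp only [T, Finset.mem_filter, Finset.mem_univ, true_and] at hDT
  obtain ⟨hDne, hDviol⟩ := hDT
  have hmin : ∀ Y : Finset (E × ZMod 3), Y.Nonempty → Y.card < D.card →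
      (Y.card : ℤ) ≤ 2 * (((G.Development γ).verts Y).card : ℤ) - 3 := by
    intro Y hYne hYlt
    by_contra hY
    push_neg at hY
    have : D.card ≤ Y.card := hDmin Y (by
      simp only [T, Finset.mem_filter, Finset.mem_univ, true_and]
      exact ⟨hYne, by omega⟩)
    omega
  -- the projected edge set
  set S : Finset E := D.image Prod.fst with hSdef
  have hSne : S.Nonempty := hDne.image _
  have hmemS : ∀ e : E, e ∈ S ↔ ∃ z, (e, z) ∈ D := by
    intro e
    simp only [hSdef, Finset.mem_image]
    constructor
    · rintro ⟨⟨e', z⟩, h, rfl⟩; exact ⟨z, h⟩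
    · rintro ⟨z, h⟩; exact ⟨(e, z), h, rfl⟩
  by_cases hAB : (D ∩ shiftE D).Nonempty
  · -- Case A: two shifts share an edge; the full lift violates a count m ≥ 2n
    have hsub2 : ∀ X Y : Finset (E × ZMod 3),
        ((((G.Development γ).verts (X ∪ Y)).card : ℤ)
            + (((G.Development γ).verts (X ∩ Y)).card : ℤ))
          ≤ (((G.Development γ).verts X).card : ℤ)
            + (((G.Development γ).verts Y).card : ℤ) := by
      intro X Y; exact_mod_cast aux_verts_card_submod _ X Y
    have hcard2 : ∀ X Y : Finset (E × ZMod 3),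
        ((X ∪ Y).card : ℤ) + ((X ∩ Y).card : ℤ) = (X.card : ℤ) + (Y.card : ℤ) := by
      intro X Y; exact_mod_cast Finset.card_union_add_card_inter X Y
    set D1 := shiftE D with hD1
    set D2 := shiftE D1 with hD2
    have hcD1 : D1.card = D.card := aux_card_shiftE D
    have hcD2 : D2.card = D.card := by rw [hD2, aux_card_shiftE, hcD1]
    have hvD1 : ((G.Development γ).verts D1).card = ((G.Development γ).verts D).card :=
      aux_card_verts_shiftE G γ D
    have hvD2 : ((G.Development γ).verts D2).card = ((G.Development γ).verts D).card := by
      rw [hD2, aux_card_verts_shiftE, hvD1]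
    have hUkey : 2 * (((G.Development γ).verts (D ∪ D1 ∪ D2)).card : ℤ)
        ≤ ((D ∪ D1 ∪ D2).card : ℤ) + 2 := by
      by_cases heq : D1 = D
      · have h2 : D2 = D := by rw [hD2, heq]; exact heq
        rw [heq, h2, Finset.union_self, Finset.union_self]
        omega
      · have hN : D ∩ D1 ≠ D := by
          intro h
          have hsubset : D ⊆ D1 := by rw [← h]; exact Finset.inter_subset_right
          exact heq (Finset.eq_of_subset_of_card_le hsubset (by omega)).symm
        have hNcard : (D ∩ D1).card < D.card :=
          Finset.card_lt_card (Finset.ssubset_iff_subset_ne.mpr ⟨Finset.inter_subset_left, hN⟩)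
        have hNint := hmin (D ∩ D1) hAB hNcard
        have s1 := hsub2 D D1
        have c1 := hcard2 D D1
        have hW : 2 * (((G.Development γ).verts (D ∪ D1)).card : ℤ)
            ≤ ((D ∪ D1).card : ℤ) + 1 := by omega
        obtain ⟨⟨e, z⟩, hez⟩ := hAB
        have hez1 : (e, z) ∈ D := (Finset.mem_inter.mp hez).1
        have hez2 : (e, z - 1) ∈ D := (aux_mem_shiftE D e z).mp (Finset.mem_inter.mp hez).2
        have hz1 : z + 1 - 1 = z := by ring
        have hZ1 : (e, z + 1) ∈ D1 := by
          rw [hD1, aux_mem_shiftE, hz1]; exact hez1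
        have hZ2 : (e, z + 1) ∈ D2 := by
          rw [hD2, aux_mem_shiftE, hz1, hD1, aux_mem_shiftE]; exact hez2
        by_cases hsub : D2 ⊆ D ∪ D1
        · rw [Finset.union_eq_left.mpr hsub]
          omega
        · have hZne : ((D ∪ D1) ∩ D2).Nonempty :=
            ⟨(e, z + 1), Finset.mem_inter.mpr ⟨Finset.mem_union.mpr (Or.inr hZ1), hZ2⟩⟩
          have hZssub : (D ∪ D1) ∩ D2 ⊂ D2 :=
            Finset.ssubset_iff_subset_ne.mpr ⟨Finset.inter_subset_right, by
              intro h
              exact hsub (by rw [← h]; exact Finset.inter_subset_left)⟩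
          have hZcard : ((D ∪ D1) ∩ D2).card < D.card := by
            have := Finset.card_lt_card hZssub; omega
          have hZint := hmin _ hZne hZcard
          have s2 := hsub2 (D ∪ D1) D2
          have c2 := hcard2 (D ∪ D1) D2
          omega
    -- identify the union with the full lift of S
    have hU : D ∪ D1 ∪ D2 = S ×ˢ (Finset.univ : Finset (ZMod 3)) := by
      ext ⟨e, z⟩
      simp only [Finset.mem_union, hD2, hD1, aux_mem_shiftE, Finset.mem_product,
        Finset.mem_univ, and_true]
      constructor
      · rintro ((h | h) | h)
        · exact (hmemS e).mpr ⟨z, h⟩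
        · exact (hmemS e).mpr ⟨z - 1, h⟩
        · exact (hmemS e).mpr ⟨z - 1 - 1, h⟩
      · intro h
        obtain ⟨w, hw⟩ := (hmemS e).mp h
        have h3 : ∀ a b : ZMod 3, a = b ∨ a - 1 = b ∨ a - 1 - 1 = b := by decide
        rcases h3 z w with h3 | h3 | h3
        · exact Or.inl (Or.inl (h3 ▸ hw))
        · exact Or.inl (Or.inr (h3 ▸ hw))
        · exact Or.inr (h3 ▸ hw)
    have hvP : (G.Development γ).verts (S ×ˢ (Finset.univ : Finset (ZMod 3)))
        = (G.verts S) ×ˢ (Finset.univ : Finset (ZMod 3)) := by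
      ext ⟨u, z⟩
      simp only [Multigraph.verts, Multigraph.Development, Finset.mem_union,
        Finset.mem_image, Finset.mem_product, Finset.mem_univ, and_true]
      constructor
      · rintro (⟨⟨e, w⟩, he, hew⟩ | ⟨⟨e, w⟩, he, hew⟩)
        · simp only [Prod.mk.injEq] at hew
          obtain ⟨h1, h2⟩ := hew
          subst h1; subst h2
          exact Or.inl ⟨e, he, rfl⟩
        · simp only [Prod.mk.injEq] at hew
          obtain ⟨h1, h2⟩ := hew
          subst h1; subst h2
          exact Or.inr ⟨e, he, rfl⟩
      · rintro (⟨e, he, rfl⟩ | ⟨e, he, rfl⟩)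
        · exact Or.inl ⟨(e, z), he, rfl⟩
        · refine Or.inr ⟨(e, z - γ e), he, ?_⟩
          simp only [Prod.mk.injEq]
          exact ⟨by trivial, by ring⟩
    have hcardP : (S ×ˢ (Finset.univ : Finset (ZMod 3))).card = S.card * 3 := by
      rw [Finset.card_product]
      norm_num
    have hvcard : ((G.Development γ).verts (S ×ˢ (Finset.univ : Finset (ZMod 3)))).card
        = (G.verts S).card * 3 := by
      rw [hvP, Finset.card_product]
      norm_num
    rw [hU] at hUkey
    have hbig : 2 * ((G.verts S).card : ℤ) ≤ (S.card : ℤ) := by omega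
    obtain ⟨ht, hnt⟩ := hCL S hSne
    by_cases htr : G.TrivialImage γ S
    · have := ht htr; omega
    · have := hnt htr; omega
  · -- Case B: the shifts are pairwise disjoint
    have hdisj : D ∩ shiftE D = ∅ := Finset.not_nonempty_iff_eq_empty.mp hAB
    have hinj : ∀ a ∈ D, ∀ b ∈ D, a.1 = b.1 → a = b := by
      rintro ⟨e, w⟩ ha ⟨e', w'⟩ hb h
      simp only at h
      subst h
      have h3 : ∀ a b : ZMod 3, a = b ∨ b = a + 1 ∨ a = b + 1 := by decide
      rcases h3 w w' with h3 | h3 | h3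
      · rw [h3]
      · exfalso
        have : (e, w') ∈ shiftE D := by
          rw [aux_mem_shiftE, h3]
          simpa using ha
        exact Finset.eq_empty_iff_forall_notMem.mp hdisj (e, w')
          (Finset.mem_inter.mpr ⟨hb, this⟩)
      · exfalso
        have : (e, w) ∈ shiftE D := by
          rw [aux_mem_shiftE, h3]
          simpa using hb
        exact Finset.eq_empty_iff_forall_notMem.mp hdisj (e, w)
          (Finset.mem_inter.mpr ⟨ha, this⟩)
    have hmcard : S.card = D.card :=
      Finset.card_image_of_injOn (fun a ha b hb h => hinj a ha b hb h)
    have hsurj : ((G.Development γ).verts D).image Prod.fst = G.verts S := by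
      ext u
      simp only [Multigraph.verts, Multigraph.Development, Finset.mem_image,
        Finset.mem_union]
      constructor
      · rintro ⟨p, hp | hp, rfl⟩
        · obtain ⟨⟨e, w⟩, he, rfl⟩ := hp
          exact Or.inl ⟨e, (hmemS e).mpr ⟨w, he⟩, rfl⟩
        · obtain ⟨⟨e, w⟩, he, rfl⟩ := hp
          exact Or.inr ⟨e, (hmemS e).mpr ⟨w, he⟩, rfl⟩
      · rintro (⟨e, he, rfl⟩ | ⟨e, he, rfl⟩)
        · obtain ⟨w, hw⟩ := (hmemS e).mp he
          exact ⟨(G.tail e, w), Or.inl ⟨(e, w), hw, rfl⟩, rfl⟩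
        · obtain ⟨w, hw⟩ := (hmemS e).mp he
          exact ⟨(G.head e, w + γ e), Or.inr ⟨(e, w), hw, rfl⟩, rfl⟩
    have hn_le : (G.verts S).card ≤ ((G.Development γ).verts D).card := by
      rw [← hsurj]; exact Finset.card_image_le
    by_cases hn : (G.verts S).card = ((G.Development γ).verts D).card
    · -- projection is a graph isomorphism onto S: build a coboundary, S trivial
      have hinjV : Set.InjOn Prod.fst ((G.Development γ).verts D : Set (V × ZMod 3)) :=
        Finset.card_image_iff.mp (by rw [hsurj, hn])
      set ψ : V → ZMod 3 := fun u =>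
        if h : ∃ z, (u, z) ∈ (G.Development γ).verts D then h.choose else 0 with hψdef
      have hψspec : ∀ u z, (u, z) ∈ (G.Development γ).verts D → ψ u = z := by
        intro u z hz
        have h : ∃ z', (u, z') ∈ (G.Development γ).verts D := ⟨z, hz⟩
        have h1 : ψ u = h.choose := by rw [hψdef]; exact dif_pos h
        have h3 : ((u, h.choose) : V × ZMod 3) = (u, z) :=
          hinjV (Finset.mem_coe.mpr h.choose_spec) (Finset.mem_coe.mpr hz) rfl
        rw [h1]
        exact congrArg Prod.snd h3
      have hcob : ∀ e ∈ S, ψ (G.head e) = ψ (G.tail e) + γ e := by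
        intro e he
        obtain ⟨w, hw⟩ := (hmemS e).mp he
        have htl : ((G.tail e, w) : V × ZMod 3) ∈ (G.Development γ).verts D :=
          Finset.mem_union.mpr (Or.inl (Finset.mem_image.mpr ⟨(e, w), hw, rfl⟩))
        have hhd : ((G.head e, w + γ e) : V × ZMod 3) ∈ (G.Development γ).verts D :=
          Finset.mem_union.mpr (Or.inr (Finset.mem_image.mpr ⟨(e, w), hw, rfl⟩))
        rw [hψspec _ _ htl, hψspec _ _ hhd]
      have htriv : G.TrivialImage γ S := aux_trivialImage_of_coboundary G γ S ψ hcob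
      have hb := (hCL S hSne).1 htriv
      omega
    · -- some vertex fiber has at least two points: m ≥ 2n
      have hbig : 2 * ((G.verts S).card : ℤ) ≤ (S.card : ℤ) := by omega
      obtain ⟨ht, hnt⟩ := hCL S hSne
      by_cases htr : G.TrivialImage γ S
      · have := ht htr; omega
      · have := hnt htr; omega
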